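/- arXiv:math/0403533 — 8 statements merged into one kernel-verified Lean document; each statement's English description precedes it below -/
import Mathlib

section
/- If the measures μ_1,...,μ_r form a weakly complete system, then the monic type II multiple orthogonal polynomials with proper multi-indices satisfy a recurrence relation of order r+1: x P_n(x) = P_{n+1}(x) + Σ_{j=0}^{r} a_{n,j} P_{n−j}(x) for n ≥ 0, with P_0 ≡ 1 and P_j ≡ 0 for j = −1,...,−r, for some complex coefficients a_{n,j}. -/
open Polynomial

/-- The `j`-th entry of the proper multi-index `ν_n`. -/
def properIndex (r n : ℕ) (j : Fin r) : ℕ := (n + r - 1 - j.val) / r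

/-- Type II orthogonality conditions (measures identified with moment functionals). -/
def TypeIISol (r : ℕ) (μ : Fin r → (Polynomial ℂ →ₗ[ℂ] ℂ)) (n : ℕ) (P : Polynomial ℂ) : Prop :=
  P.degree ≤ (n : WithBot ℕ) ∧ ∀ j : Fin r, ∀ ℓ < properIndex r n j, μ j (X ^ ℓ * P) = 0

/-- The proper multi-index `ν_n` is normal. -/
def NormalIndex (r : ℕ) (μ : Fin r → (Polynomial ℂ →ₗ[ℂ] ℂ)) (n : ℕ) : Prop :=
  (∀ P, TypeIISol r μ n P → P = 0 ∨ P.natDegree = n) ∧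
  (∀ P Q, TypeIISol r μ n P → TypeIISol r μ n Q → P ≠ 0 → ∃ c : ℂ, Q = c • P)

/-- Weakly complete system: all proper multi-indices are normal. -/
def WeaklyComplete (r : ℕ) (μ : Fin r → (Polynomial ℂ →ₗ[ℂ] ℂ)) : Prop :=
  ∀ n, NormalIndex r μ n

lemma withbot_lt_succ {a : WithBot ℕ} {n : ℕ} (h : a < ((n + 1 : ℕ) : WithBot ℕ)) :
    a ≤ (n : WithBot ℕ) := by
  rcases eq_or_ne a ⊥ with hb | hb
  · simp [hb]
  · lift a to ℕ using hb
    rw [Nat.cast_withBot] at h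
    rw [Nat.cast_withBot]
    exact WithBot.coe_le_coe.mpr (Nat.lt_succ_iff.mp (WithBot.coe_lt_coe.mp h))

lemma properIndex_mono (r : ℕ) (j : Fin r) {m n : ℕ} (h : m ≤ n) :
    properIndex r m j ≤ properIndex r n j :=
  Nat.div_le_div_right (by omega)

lemma expand_in_basis (P : ℕ → Polynomial ℂ) (hmonic : ∀ n, (P n).Monic)
    (hdeg : ∀ n, (P n).natDegree = n) :
    ∀ (n : ℕ) (Q : Polynomial ℂ), Q.degree ≤ (n : WithBot ℕ) →
      ∃ c : ℕ → ℂ, Q = ∑ k ∈ Finset.range (n + 1), c k • P k := by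
  intro n
  induction n with
  | zero =>
    intro Q hQ
    refine ⟨fun _ => Q.coeff 0, ?_⟩
    have h1 : P 0 = 1 := (hmonic 0).natDegree_eq_zero.mp (hdeg 0)
    rw [Finset.sum_range_one, h1, smul_eq_C_mul, mul_one]
    exact eq_C_of_degree_le_zero hQ
  | succ n ih =>
    intro Q hQ
    have hdQ' : (Q - Q.coeff (n + 1) • P (n + 1)).degree ≤ (n : WithBot ℕ) := by
      rw [degree_le_iff_coeff_zero]
      intro m hm
      have hm' : n < m := by exact_mod_cast hm
      simp only [coeff_sub, coeff_smul, smul_eq_mul]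
      rcases eq_or_lt_of_le (Nat.succ_le_of_lt hm') with h | h
      · rw [← h]
        have hc1 : (P (n + 1)).coeff (n + 1) = 1 := by
          have := (hmonic (n + 1)).coeff_natDegree
          rwa [hdeg (n + 1)] at this
        rw [hc1, mul_one, sub_self]
      · have h0 : Q.coeff m = 0 :=
          coeff_eq_zero_of_degree_lt (lt_of_le_of_lt hQ (by exact_mod_cast h))
        have h1 : (P (n + 1)).coeff m = 0 :=
          coeff_eq_zero_of_natDegree_lt (by rw [hdeg]; exact h)
        rw [h0, h1, mul_zero, sub_zero]
    obtain ⟨c', hc'⟩ := ih _ hdQ'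
    refine ⟨fun k => if k = n + 1 then Q.coeff (n + 1) else c' k, ?_⟩
    rw [Finset.sum_range_succ]
    have hsum : ∑ k ∈ Finset.range (n + 1),
        (if k = n + 1 then Q.coeff (n + 1) else c' k) • P k
        = ∑ k ∈ Finset.range (n + 1), c' k • P k := by
      refine Finset.sum_congr rfl fun k hk => ?_
      rw [if_neg (by simp only [Finset.mem_range] at hk; omega)]
    rw [hsum, ← hc']
    simp

/-- for a weakly complete system, the monic type II multiple orthogonal
polynomials satisfy a recurrence relation of order `r+1`:
`x P_n = P_{n+1} + ∑_{j=0}^{r} a_{n,j} P_{n-j}`, with the convention `P_{n-j} = 0` for `j > n`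
(so `P_0 ≡ 1` and `P_{-1} = ⋯ = P_{-r} ≡ 0`). -/
theorem typeII_recurrence (r : ℕ) (hr : 0 < r)
    (μ : Fin r → (Polynomial ℂ →ₗ[ℂ] ℂ)) (hwc : WeaklyComplete r μ)
    (P : ℕ → Polynomial ℂ)
    (hmonic : ∀ n, (P n).Monic) (hdeg : ∀ n, (P n).natDegree = n)
    (horth : ∀ n, TypeIISol r μ n (P n)) :
    ∃ a : ℕ → ℕ → ℂ, ∀ n,
      X * P n = P (n + 1) +
        ∑ j ∈ Finset.range (r + 1), a n j • (if j ≤ n then P (n - j) else 0) := by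
  have key : ∀ n, ∃ b : ℕ → ℂ, X * P n = P (n + 1) +
      ∑ j ∈ Finset.range (r + 1), b j • (if j ≤ n then P (n - j) else 0) := by
    intro n
    have hQdeg : (X * P n - P (n + 1)).degree ≤ (n : WithBot ℕ) := by
      have hm1 : (X * P n).Monic := monic_X.mul (hmonic n)
      have hd1 : (X * P n).degree = ((n + 1 : ℕ) : WithBot ℕ) := by
        rw [degree_eq_natDegree hm1.ne_zero, natDegree_mul X_ne_zero (hmonic n).ne_zero,
          natDegree_X, hdeg n, add_comm]
      have hd2 : (P (n + 1)).degree = ((n + 1 : ℕ) : WithBot ℕ) := by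
        rw [degree_eq_natDegree (hmonic (n + 1)).ne_zero, hdeg (n + 1)]
      have hlt : (X * P n - P (n + 1)).degree < (X * P n).degree :=
        degree_sub_lt (by rw [hd1, hd2]) hm1.ne_zero
          (by rw [hm1.leadingCoeff, (hmonic (n + 1)).leadingCoeff])
      rw [hd1] at hlt
      exact withbot_lt_succ hlt
    obtain ⟨c, hc⟩ := expand_in_basis P hmonic hdeg n _ hQdeg
    set S : Polynomial ℂ := ∑ i ∈ Finset.Ico (n - r) (n + 1), c i • P i with hS
    set R : Polynomial ℂ := ∑ i ∈ Finset.range (n - r), c i • P i with hRdef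
    have hsplit : X * P n - P (n + 1) = R + S := by
      rw [hc, Finset.range_eq_Ico,
        ← Finset.sum_Ico_consecutive (fun i => c i • P i) (Nat.zero_le (n - r))
          (by omega : n - r ≤ n + 1), ← Finset.range_eq_Ico]
    have hR0 : R = 0 := by
      rcases le_or_gt n r with h | h
      · have hz : n - r = 0 := by omega
        simp [hRdef, hz]
      · -- n ≥ r + 1
        have hRdeg : R.degree < ((n - r : ℕ) : WithBot ℕ) := by
          apply lt_of_le_of_lt (degree_sum_le _ _)
          rw [Finset.sup_lt_iff (by exact_mod_cast WithBot.bot_lt_coe (n - r))]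
          intro k hk
          apply lt_of_le_of_lt (degree_smul_le _ _)
          rw [degree_eq_natDegree (hmonic k).ne_zero, hdeg k]
          exact_mod_cast Finset.mem_range.mp hk
        have horthR : ∀ j : Fin r, ∀ ℓ < properIndex r (n - r) j, μ j (X ^ ℓ * R) = 0 := by
          intro j ℓ hℓ
          have hRQS : R = X * P n - P (n + 1) - S := by rw [hsplit]; abel
          have expand : X ^ ℓ * R = X ^ (ℓ + 1) * P n - X ^ ℓ * P (n + 1)
              - ∑ i ∈ Finset.Ico (n - r) (n + 1), c i • (X ^ ℓ * P i) := by
            have hsum2 : ∑ i ∈ Finset.Ico (n - r) (n + 1), c i • (X ^ ℓ * P i)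
                = X ^ ℓ * S := by
              rw [hS, Finset.mul_sum]
              exact Finset.sum_congr rfl fun i _ => (mul_smul_comm _ _ _).symm
            rw [hRQS, mul_sub, mul_sub, ← mul_assoc, ← pow_succ, hsum2]
          rw [expand, map_sub, map_sub, map_sum]
          have hpi : properIndex r n j = properIndex r (n - r) j + 1 := by
            unfold properIndex
            have hj : j.val < r := j.isLt
            have harith : n + r - 1 - j.val = (n - r + r - 1 - j.val) + r := by omega
            rw [harith, Nat.add_div_right _ hr]
          have h1 : μ j (X ^ (ℓ + 1) * P n) = 0 :=
            (horth n).2 j (ℓ + 1) (by omega)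
          have h2 : μ j (X ^ ℓ * P (n + 1)) = 0 :=
            (horth (n + 1)).2 j ℓ
              (lt_of_lt_of_le hℓ (properIndex_mono r j (by omega)))
          have h3 : ∀ i ∈ Finset.Ico (n - r) (n + 1), μ j (c i • (X ^ ℓ * P i)) = 0 := by
            intro i hi
            rw [map_smul]
            have hi' : n - r ≤ i := (Finset.mem_Ico.mp hi).1
            have := (horth i).2 j ℓ (lt_of_lt_of_le hℓ (properIndex_mono r j hi'))
            simp [this]
          rw [h1, h2, Finset.sum_eq_zero h3]
          ring
        rcases (hwc (n - r)).1 R ⟨le_of_lt hRdeg, horthR⟩ with h0 | hdn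
        · exact h0
        · by_cases h0 : R = 0
          · exact h0
          · exfalso
            rw [degree_eq_natDegree h0, hdn] at hRdeg
            exact lt_irrefl _ hRdeg
    refine ⟨fun j => if j ≤ n then c (n - j) else 0, ?_⟩
    have hSsum : ∑ j ∈ Finset.range (r + 1),
        (if j ≤ n then c (n - j) else 0) • (if j ≤ n then P (n - j) else 0) = S := by
      have step1 : ∀ j ∈ Finset.range (r + 1),
          (if j ≤ n then c (n - j) else 0) • (if j ≤ n then P (n - j) else 0)
          = if j ≤ n then c (n - j) • P (n - j) else 0 := by
        intro j _
        split <;> simp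
      rw [Finset.sum_congr rfl step1, ← Finset.sum_filter, hS]
      refine Finset.sum_nbij' (fun j => n - j) (fun i => n - i) ?_ ?_ ?_ ?_ ?_
      · intro j hj
        simp only [Finset.mem_filter, Finset.mem_range] at hj
        simp only [Finset.mem_Ico]
        omega
      · intro i hi
        simp only [Finset.mem_Ico] at hi
        simp only [Finset.mem_filter, Finset.mem_range]
        omega
      · intro j hj
        simp only [Finset.mem_filter, Finset.mem_range] at hj
        show n - (n - j) = j
        omega
      · intro i hi
        simp only [Finset.mem_Ico] at hi
        show n - (n - i) = i
        omega
      · intro j hj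
        rfl
    rw [hSsum]
    have hQS : X * P n - P (n + 1) = S := by rw [hsplit, hR0, zero_add]
    rw [← hQS]
    abel
  choose a ha using key
  exact ⟨a, ha⟩
end

section
/- For a weakly complete system, the recurrence coefficient a_{n+r−1,r} is nonzero for all n ≥ 1. More precisely, writing n = mr + s with 0 < s ≤ r, one has a_{n+r−1,r} = ∫ x P_{n+r−1}(x) A_{n,s}(x) dμ_s(x) ≠ 0. -/
open Polynomial

/-- The type I multiple orthogonal vector polynomials `A_n = (A_{n,1},…,A_{n,r})`,
with the normalization `∫ x^{n-1} ∑_j A_{n,j}(x) dμ_j(x) = 1`. -/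
def TypeINormalized (r : ℕ) (μ : Fin r → (Polynomial ℂ →ₗ[ℂ] ℂ))
    (A : ℕ → Fin r → Polynomial ℂ) : Prop :=
  ∀ n, 1 ≤ n →
    (∀ j : Fin r, (A n j).degree < (properIndex r n j : WithBot ℕ)) ∧
    (∀ ℓ : ℕ, ℓ + 2 ≤ n → ∑ j : Fin r, μ j (X ^ ℓ * A n j) = 0) ∧
    (∑ j : Fin r, μ j (X ^ (n - 1) * A n j) = 1)

/-- Auxiliary: a moment functional kills `Q * Pm` whenever all monomials of `Q` are
killed against `Pm`. -/
lemma mu_mul_eq_zero_aux {r : ℕ} (μ : Fin r → (Polynomial ℂ →ₗ[ℂ] ℂ)) (j : Fin r) (d : ℕ)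
    (Pm : Polynomial ℂ) (hP : ∀ ℓ < d, μ j (X ^ ℓ * Pm) = 0)
    (Q : Polynomial ℂ) (hQ : ∀ ℓ, Q.coeff ℓ ≠ 0 → ℓ < d) :
    μ j (Q * Pm) = 0 := by
  conv_lhs => rw [Polynomial.as_sum_range' Q (Q.natDegree + 1) (Nat.lt_succ_self _)]
  rw [Finset.sum_mul, map_sum]
  apply Finset.sum_eq_zero
  intro ℓ _
  by_cases hc : Q.coeff ℓ = 0
  · simp [hc]
  · have : (monomial ℓ (Q.coeff ℓ)) * Pm = Q.coeff ℓ • (X ^ ℓ * Pm) := by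
      rw [← Polynomial.C_mul_X_pow_eq_monomial, ← Polynomial.smul_eq_C_mul, smul_mul_assoc]
    rw [this, map_smul, hP ℓ (hQ ℓ hc), smul_zero]

/-- Auxiliary: evaluating the type I vector functional on a polynomial of degree `< n`
gives its `(n-1)`-st coefficient. -/
lemma typeI_eval_aux {r : ℕ} (μ : Fin r → (Polynomial ℂ →ₗ[ℂ] ℂ)) (A : ℕ → Fin r → Polynomial ℂ)
    (hA : TypeINormalized r μ A) (n : ℕ) (hn : 1 ≤ n) (Q : Polynomial ℂ)
    (hQ : Q.natDegree < n) :
    ∑ j : Fin r, μ j (Q * A n j) = Q.coeff (n - 1) := by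
  have step : ∀ j : Fin r, μ j (Q * A n j)
      = ∑ ℓ ∈ Finset.range n, Q.coeff ℓ * μ j (X ^ ℓ * A n j) := by
    intro j
    conv_lhs => rw [Polynomial.as_sum_range' Q n hQ]
    rw [Finset.sum_mul, map_sum]
    refine Finset.sum_congr rfl fun ℓ _ => ?_
    have : (monomial ℓ (Q.coeff ℓ)) * A n j = Q.coeff ℓ • (X ^ ℓ * A n j) := by
      rw [← Polynomial.C_mul_X_pow_eq_monomial, ← Polynomial.smul_eq_C_mul, smul_mul_assoc]
    rw [this, map_smul, smul_eq_mul]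
  simp_rw [step]
  rw [Finset.sum_comm]
  rw [Finset.sum_eq_single (n - 1)]
  · rw [← Finset.mul_sum, (hA n hn).2.2, mul_one]
  · intro ℓ hℓ hne
    rw [← Finset.mul_sum, (hA n hn).2.1 ℓ (by simp at hℓ; omega), mul_zero]
  · intro h
    exact absurd (Finset.mem_range.mpr (by omega)) h

/-- Auxiliary: coefficients above a degree bound vanish. -/
lemma coeff_bound_aux {p : Polynomial ℂ} {d : ℕ} (h : p.degree < (d : WithBot ℕ)) :
    ∀ ℓ, p.coeff ℓ ≠ 0 → ℓ < d := by
  intro ℓ hc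
  by_contra hle
  exact hc (Polynomial.coeff_eq_zero_of_degree_lt
    (h.trans_le (by exact_mod_cast Nat.le_of_not_lt hle)))

/-- for a weakly complete system the recurrence coefficient `a_{n+r-1,r}` is
nonzero for all `n ≥ 1`; more precisely, writing `n = m r + s` with `0 < s ≤ r` (here the
measure index `s` is `sidx.val + 1` for `sidx : Fin r`),
`a_{n+r-1,r} = ∫ x P_{n+r-1}(x) A_{n,s}(x) dμ_s(x) ≠ 0`. -/
theorem recurrence_coefficient_ne_zero (r : ℕ) (hr : 0 < r)
    (μ : Fin r → (Polynomial ℂ →ₗ[ℂ] ℂ)) (hwc : WeaklyComplete r μ)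
    (P : ℕ → Polynomial ℂ)
    (hmonic : ∀ n, (P n).Monic) (hdeg : ∀ n, (P n).natDegree = n)
    (horth : ∀ n, TypeIISol r μ n (P n))
    (A : ℕ → Fin r → Polynomial ℂ) (hA : TypeINormalized r μ A)
    (a : ℕ → ℕ → ℂ)
    (hrec : ∀ n, X * P n = P (n + 1) +
      ∑ j ∈ Finset.range (r + 1), a n j • (if j ≤ n then P (n - j) else 0)) :
    ∀ n, 1 ≤ n → ∀ m : ℕ, ∀ sidx : Fin r, n = m * r + (sidx.val + 1) →
      a (n + r - 1) r = μ sidx (X * P (n + r - 1) * A n sidx) ∧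
      a (n + r - 1) r ≠ 0 := by
  intro n hn m sidx hns
  have ht : sidx.val < r := sidx.isLt
  set t := sidx.val with htdef
  set N := n + r - 1 with hNdef
  have key : ∀ q b : ℕ, b < r → (q * r + b) / r = q := by
    intro q b hb
    rw [mul_comm, Nat.mul_add_div hr, Nat.div_eq_of_lt hb, add_zero]
  -- arithmetic facts about properIndex
  have f1 : properIndex r n sidx = m + 1 := by
    show (n + r - 1 - t) / r = m + 1
    rw [show n + r - 1 - t = (m + 1) * r + 0 by
      have : (m + 1) * r = m * r + r := by ring
      omega]
    exact key _ _ hr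
  have f2 : properIndex r (n - 1) sidx = m := by
    show (n - 1 + r - 1 - t) / r = m
    rw [show n - 1 + r - 1 - t = m * r + (r - 1) by omega]
    exact key _ _ (by omega)
  have f3 : ∀ j : Fin r, j ≠ sidx → properIndex r n j = properIndex r (n - 1) j := by
    intro j hj
    have hjt : j.val ≠ t := fun h => hj (Fin.ext h)
    have hjr : j.val < r := j.isLt
    show (n + r - 1 - j.val) / r = (n - 1 + r - 1 - j.val) / r
    rcases Nat.lt_or_ge j.val t with h | h
    · rw [show n + r - 1 - j.val = (m + 1) * r + (t - j.val) by
        have : (m + 1) * r = m * r + r := by ring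
        omega]
      rw [show n - 1 + r - 1 - j.val = (m + 1) * r + (t - j.val - 1) by
        have : (m + 1) * r = m * r + r := by ring
        omega]
      rw [key _ _ (by omega), key _ _ (by omega)]
    · have h' : t < j.val := by omega
      rw [show n + r - 1 - j.val = m * r + (r - (j.val - t)) by omega]
      rw [show n - 1 + r - 1 - j.val = m * r + (r - (j.val - t) - 1) by omega]
      rw [key _ _ (by omega), key _ _ (by omega)]
  have f4 : ∀ j : Fin r, j ≠ sidx → properIndex r N j = properIndex r n j + 1 := by
    intro j hj
    have hjt : j.val ≠ t := fun h => hj (Fin.ext h)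
    have hjr : j.val < r := j.isLt
    show (N + r - 1 - j.val) / r = (n + r - 1 - j.val) / r + 1
    rcases Nat.lt_or_ge j.val t with h | h
    · rw [show N + r - 1 - j.val = (m + 2) * r + (t - j.val - 1) by
        have : (m + 2) * r = m * r + r + r := by ring
        omega]
      rw [show n + r - 1 - j.val = (m + 1) * r + (t - j.val) by
        have : (m + 1) * r = m * r + r := by ring
        omega]
      rw [key _ _ (by omega), key _ _ (by omega)]
    · have h' : t < j.val := by omega
      rw [show N + r - 1 - j.val = (m + 1) * r + (r - (j.val - t) - 1) by
        have : (m + 1) * r = m * r + r := by ring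
        omega]
      rw [show n + r - 1 - j.val = m * r + (r - (j.val - t)) by omega]
      rw [key _ _ (by omega), key _ _ (by omega)]
  have f5 : properIndex r N sidx = m + 1 := by
    show (N + r - 1 - t) / r = m + 1
    rw [show N + r - 1 - t = (m + 1) * r + (r - 1) by
      have : (m + 1) * r = m * r + r := by ring
      omega]
    exact key _ _ (by omega)
  have f6 : properIndex r (N + 1) sidx = m + 2 := by
    show (N + 1 + r - 1 - t) / r = m + 2
    rw [show N + 1 + r - 1 - t = (m + 2) * r + 0 by
      have : (m + 2) * r = m * r + r + r := by ring
      omega]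
    exact key _ _ hr
  have f7 : ∀ j : Fin r, j ≠ sidx → properIndex r (N + 1) j = properIndex r N j := by
    intro j hj
    have hjt : j.val ≠ t := fun h => hj (Fin.ext h)
    have hjr : j.val < r := j.isLt
    show (N + 1 + r - 1 - j.val) / r = (N + r - 1 - j.val) / r
    rcases Nat.lt_or_ge j.val t with h | h
    · rw [show N + 1 + r - 1 - j.val = (m + 2) * r + (t - j.val) by
        have : (m + 2) * r = m * r + r + r := by ring
        omega]
      rw [show N + r - 1 - j.val = (m + 2) * r + (t - j.val - 1) by
        have : (m + 2) * r = m * r + r + r := by ring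
        omega]
      rw [key _ _ (by omega), key _ _ (by omega)]
    · have h' : t < j.val := by omega
      rw [show N + 1 + r - 1 - j.val = (m + 1) * r + (r - (j.val - t)) by
        have : (m + 1) * r = m * r + r := by ring
        omega]
      rw [show N + r - 1 - j.val = (m + 1) * r + (r - (j.val - t) - 1) by
        have : (m + 1) * r = m * r + r := by ring
        omega]
      rw [key _ _ (by omega), key _ _ (by omega)]
  have f8 : ∀ k, k < r → properIndex r (N - k) sidx = m + 1 := by
    intro k hk
    show (N - k + r - 1 - t) / r = m + 1
    rw [show N - k + r - 1 - t = (m + 1) * r + (r - 1 - k) by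
      have : (m + 1) * r = m * r + r := by ring
      omega]
    exact key _ _ (by omega)
  have fmono : ∀ (n₁ n₂ : ℕ) (j : Fin r), n₁ ≤ n₂ →
      properIndex r n₁ j ≤ properIndex r n₂ j :=
    fun n₁ n₂ j h => Nat.div_le_div_right (by omega)
  -- cleaned-up recurrence at N
  have hrN : X * P N = P (N + 1) + ∑ k ∈ Finset.range (r + 1), a N k • P (N - k) := by
    rw [hrec N]
    congr 1
    refine Finset.sum_congr rfl fun k hk => ?_
    rw [if_pos (by simp only [Finset.mem_range] at hk; omega)]
  -- vanishing of μ j (Q * P M) when deg Q < properIndex r M j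
  have hvan : ∀ (M : ℕ) (j : Fin r) (Q : Polynomial ℂ),
      Q.degree < (properIndex r M j : WithBot ℕ) → μ j (Q * P M) = 0 := by
    intro M j Q hQ
    exact mu_mul_eq_zero_aux μ j (properIndex r M j) (P M) ((horth M).2 j) Q
      (coeff_bound_aux hQ)
  -- the A-polynomials vanish against P M for M ≥ n
  have hAvan : ∀ (M : ℕ) (j : Fin r), n ≤ M → μ j (A n j * P M) = 0 := by
    intro M j hM
    refine hvan M j _ (lt_of_lt_of_le ((hA n hn).1 j) ?_)
    exact_mod_cast fmono n M j hM
  -- Step A : the equality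
  have hXA : ∀ j : Fin r, j ≠ sidx → μ j ((X * A n j) * P N) = 0 := by
    intro j hj
    refine hvan N j _ ?_
    rcases eq_or_ne (A n j) 0 with h0 | h0
    · rw [h0, mul_zero, Polynomial.degree_zero]
      exact WithBot.bot_lt_coe _
    · have hAd : (A n j).natDegree < properIndex r n j :=
        (Polynomial.natDegree_lt_iff_degree_lt h0).mpr ((hA n hn).1 j)
      have hXAne : X * A n j ≠ 0 := mul_ne_zero Polynomial.X_ne_zero h0
      rw [← Polynomial.natDegree_lt_iff_degree_lt hXAne,
        Polynomial.natDegree_mul Polynomial.X_ne_zero h0, Polynomial.natDegree_X, f4 j hj]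
      omega
  have hNr : N - r = n - 1 := by omega
  have hsum : ∑ j : Fin r, μ j ((X * P N) * A n j) = a N r := by
    have expand : ∀ j : Fin r, μ j ((X * P N) * A n j)
        = μ j (A n j * P (N + 1)) + ∑ k ∈ Finset.range (r + 1), a N k * μ j (A n j * P (N - k)) := by
      intro j
      rw [hrN, add_mul, Finset.sum_mul, map_add, map_sum]
      congr 1
      · rw [mul_comm]
      · refine Finset.sum_congr rfl fun k _ => ?_
        rw [smul_mul_assoc, map_smul, smul_eq_mul, mul_comm (P (N - k))]
    simp_rw [expand]
    rw [Finset.sum_add_distrib]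
    have h1 : ∑ j : Fin r, μ j (A n j * P (N + 1)) = 0 :=
      Finset.sum_eq_zero fun j _ => hAvan (N + 1) j (by omega)
    rw [h1, zero_add, Finset.sum_comm]
    rw [Finset.sum_eq_single r]
    · have : ∀ j : Fin r, a N r * μ j (A n j * P (N - r)) = a N r * μ j (P (n - 1) * A n j) := by
        intro j; rw [hNr, mul_comm (A n j)]
      simp_rw [this]
      rw [← Finset.mul_sum,
        typeI_eval_aux μ A hA n hn (P (n - 1)) (by rw [hdeg]; omega)]
      have : (P (n - 1)).coeff (n - 1) = 1 := by
        have := (hmonic (n - 1)).coeff_natDegree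
        rwa [hdeg] at this
      rw [this, mul_one]
    · intro k hk hne
      have hk' : k < r := by simp only [Finset.mem_range] at hk; omega
      have : ∀ j : Fin r, μ j (A n j * P (N - k)) = 0 :=
        fun j => hAvan (N - k) j (by omega)
      simp_rw [this]
      simp
    · intro h
      exact absurd (Finset.mem_range.mpr (by omega)) h
  have heq : a N r = μ sidx (X * P N * A n sidx) := by
    rw [← hsum, Finset.sum_eq_single sidx]
    · intro j _ hj
      rw [show (X * P N) * A n j = (X * A n j) * P N by ring]
      exact hXA j hj
    · intro h; exact absurd (Finset.mem_univ sidx) h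
  -- Step B : nonvanishing
  -- d := μ sidx (X^m * P (n-1)) ≠ 0
  have hd : μ sidx (X ^ m * P (n - 1)) ≠ 0 := by
    intro h0
    have hsol : TypeIISol r μ n (P (n - 1)) := by
      constructor
      · rw [← Polynomial.natDegree_le_iff_degree_le, hdeg]; omega
      · intro j ℓ hℓ
        by_cases hj : j = sidx
        · subst hj
          rw [f1] at hℓ
          rcases Nat.lt_or_ge ℓ m with h | h
          · exact (horth (n - 1)).2 j ℓ (by rw [f2]; exact h)
          · have : ℓ = m := by omega
            rw [this]; exact h0
        · exact (horth (n - 1)).2 j ℓ (by rw [← f3 j hj]; exact hℓ)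
    rcases (hwc n).1 _ hsol with h | h
    · exact (hmonic (n - 1)).ne_zero h
    · rw [hdeg] at h; omega
  -- D := μ sidx (X^(m+1) * P N) ≠ 0
  have hD : μ sidx (X ^ (m + 1) * P N) ≠ 0 := by
    intro h0
    have hsol : TypeIISol r μ (N + 1) (P N) := by
      constructor
      · rw [← Polynomial.natDegree_le_iff_degree_le, hdeg]; omega
      · intro j ℓ hℓ
        by_cases hj : j = sidx
        · subst hj
          rw [f6] at hℓ
          rcases Nat.lt_or_ge ℓ (m + 1) with h | h
          · exact (horth N).2 j ℓ (by rw [f5]; exact h)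
          · have : ℓ = m + 1 := by omega
            rw [this]; exact h0
        · exact (horth N).2 j ℓ (by rw [← f7 j hj]; exact hℓ)
    rcases (hwc (N + 1)).1 _ hsol with h | h
    · exact (hmonic N).ne_zero h
    · rw [hdeg] at h; omega
  -- D = a N r * d
  have hprod : μ sidx (X ^ (m + 1) * P N) = a N r * μ sidx (X ^ m * P (n - 1)) := by
    have h := congrArg (fun q => μ sidx (X ^ m * q)) hrN
    rw [show X ^ m * (X * P N) = X ^ (m + 1) * P N by ring] at h
    rw [h, mul_add, map_add, Finset.mul_sum, map_sum]
    have h1 : μ sidx (X ^ m * P (N + 1)) = 0 :=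
      (horth (N + 1)).2 sidx m (by rw [f6]; omega)
    rw [h1, zero_add]
    rw [Finset.sum_eq_single r]
    · rw [mul_smul_comm, map_smul, smul_eq_mul, hNr]
    · intro k hk hne
      have hk' : k < r := by simp only [Finset.mem_range] at hk; omega
      rw [mul_smul_comm, map_smul, smul_eq_mul,
        (horth (N - k)).2 sidx m (by rw [f8 k hk']; omega), mul_zero]
    · intro h
      exact absurd (Finset.mem_range.mpr (by omega)) h
  refine ⟨heq, ?_⟩
  intro h0
  rw [h0, zero_mul] at hprod
  exact hD hprod
end

section
/- Writing n = mr + s with 0 < s ≤ r and m ≥ 0, the s-th component of the type I vector polynomial satisfies A_{mr+s,s}(x) = (A_{s,s} / ∏_{i=1}^{m} a_{ir+s−1,r}) x^m + O(x^{m−1}); in particular A_{mr+s,s} has exact degree m and its leading coefficient is A_{s,s} / ∏_{i=1}^{m} a_{ir+s−1,r}. -/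
open Polynomial

/-- writing `n = m r + s` with `0 < s ≤ r` (here `s = sidx.val + 1` for
`sidx : Fin r`), the `s`-th component of the type I vector polynomial satisfies
`A_{mr+s,s}(x) = (A_{s,s} / ∏_{i=1}^{m} a_{ir+s−1,r}) x^m + O(x^{m−1})`; in particular
`A_{mr+s,s}` has exact degree `m` with that leading coefficient. -/
theorem typeI_component_leading_coeff (r : ℕ) (hr : 0 < r) (a : ℕ → ℕ → ℂ)
    (hconv : ∀ ℓ1 ℓ2 : ℕ, ℓ1 < ℓ2 → ℓ2 ≤ r → a ℓ1 ℓ2 = 1)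
    (har : ∀ ℓ, r ≤ ℓ → a ℓ r ≠ 0)
    (A : ℕ → Fin r → Polynomial ℂ)
    (hA0 : ∀ k : Fin r, A 0 k = 0)
    (hAconst : ∀ i j : Fin r, (A (i.val + 1) j).degree ≤ 0)
    (hAtri : ∀ i j : Fin r, i.val < j.val → A (i.val + 1) j = 0)
    (hAdiag : ∀ j : Fin r, A (j.val + 1) j ≠ 0)
    (hArec : ∀ n, 1 ≤ n → ∀ k : Fin r,
      X * A n k = A (n - 1) k +
        ∑ j ∈ Finset.range (r + 1), a (n + j - 1) j • A (n + j) k) :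
    ∀ m : ℕ, ∀ sidx : Fin r,
      A (m * r + sidx.val + 1) sidx ≠ 0 ∧
      (A (m * r + sidx.val + 1) sidx).natDegree = m ∧
      (A (m * r + sidx.val + 1) sidx).leadingCoeff =
        (A (sidx.val + 1) sidx).coeff 0 / ∏ i ∈ Finset.Icc 1 m, a (i * r + sidx.val) r := by
  intro m sidx
  have hsr : sidx.val < r := sidx.isLt
  set s : ℕ := sidx.val + 1 with hs
  -- vanishing below the diagonal
  have hZ : ∀ n, n ≤ sidx.val → A n sidx = 0 := by
    intro n hn
    match n with
    | 0 => exact hA0 sidx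
    | Nat.succ k => exact hAtri ⟨k, by omega⟩ sidx (by simp; omega)
  -- degree bound
  have hB : ∀ n, (A n sidx).natDegree ≤ (n - s) / r := by
    intro n
    induction n using Nat.strong_induction_on with
    | _ n ih =>
      rcases Nat.lt_or_ge n (r + 1) with hn | hn
      · match n, hn with
        | 0, _ => simp [hA0]
        | Nat.succ k, hn =>
          have h0 : (A (k + 1) sidx).natDegree ≤ 0 :=
            Polynomial.natDegree_le_iff_degree_le.mpr
              (by simpa using hAconst ⟨k, by omega⟩ sidx)
          exact le_trans h0 (Nat.zero_le _)
      · set n0 := n - r with hn0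
        have hn0r : n = n0 + r := by omega
        have h := hArec n0 (by omega) sidx
        rw [Finset.sum_range_succ] at h
        simp only [Polynomial.smul_eq_C_mul] at h
        have key : Polynomial.C (a (n0 + r - 1) r) * A (n0 + r) sidx
            = X * A n0 sidx - A (n0 - 1) sidx
              - ∑ j ∈ Finset.range r, Polynomial.C (a (n0 + j - 1) j) * A (n0 + j) sidx := by
          linear_combination -h
        have ha : a (n0 + r - 1) r ≠ 0 := har _ (by omega)
        have hd : (A (n0 + r) sidx).natDegree ≤ (n - s) / r := by
          rw [← Polynomial.natDegree_C_mul ha, key]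
          refine le_trans (Polynomial.natDegree_sub_le _ _)
            (max_le (le_trans (Polynomial.natDegree_sub_le _ _) (max_le ?_ ?_)) ?_)
          · rcases le_or_gt n0 sidx.val with hle | hlt
            · rw [hZ n0 hle, mul_zero]; simp
            · refine le_trans Polynomial.natDegree_mul_le ?_
              have hi := ih n0 (by omega)
              have hdiv : (n0 - s) / r + 1 = (n - s) / r := by
                have e : n - s = (n0 - s) + r := by omega
                rw [e, Nat.add_div_right _ hr]
              rw [Polynomial.natDegree_X, ← hdiv]
              omega
          · exact le_trans (ih (n0 - 1) (by omega)) (Nat.div_le_div_right (by omega))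
          · refine Polynomial.natDegree_sum_le_of_forall_le _ _ (fun j hj => ?_)
            have hj' := Finset.mem_range.mp hj
            refine le_trans Polynomial.natDegree_mul_le ?_
            rw [Polynomial.natDegree_C, zero_add]
            exact le_trans (ih (n0 + j) (by omega)) (Nat.div_le_div_right (by omega))
        rw [hn0r] at hd ⊢; exact hd
  -- nonvanishing of the initial coefficient
  have hc0 : (A s sidx).coeff 0 ≠ 0 := by
    intro h
    apply hAdiag sidx
    have hdeg : (A s sidx).natDegree ≤ 0 :=
      Polynomial.natDegree_le_iff_degree_le.mpr (by simpa using hAconst sidx sidx)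
    have := Polynomial.eq_C_of_natDegree_le_zero hdeg
    rw [h] at this
    simpa using this
  -- exact leading coefficient by induction
  have hC : ∀ m : ℕ, (A (m * r + s) sidx).coeff m
      = (A s sidx).coeff 0 / ∏ i ∈ Finset.Icc 1 m, a (i * r + sidx.val) r := by
    intro m
    induction m with
    | zero => simp
    | succ m ihm =>
      set n0 := m * r + s with hn0
      have hn1 : 1 ≤ n0 := le_trans (by omega) (Nat.le_add_left s (m * r))
      have hnr : r ≤ n0 + r - 1 := by omega
      have hidx : n0 + r - 1 = (m + 1) * r + sidx.val := by
        rw [hn0, hs, Nat.succ_mul]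
        generalize m * r = t
        omega
      have hidx2 : n0 + r = (m + 1) * r + s := by
        rw [hn0, Nat.succ_mul]
        generalize m * r = t
        omega
      have h := hArec n0 hn1 sidx
      rw [Finset.sum_range_succ] at h
      simp only [Polynomial.smul_eq_C_mul] at h
      have key : Polynomial.C (a (n0 + r - 1) r) * A (n0 + r) sidx
          = X * A n0 sidx - A (n0 - 1) sidx
            - ∑ j ∈ Finset.range r, Polynomial.C (a (n0 + j - 1) j) * A (n0 + j) sidx := by
        linear_combination -h
      have hcoeff := congrArg (fun p => Polynomial.coeff p (m + 1)) key
      simp only [Polynomial.coeff_C_mul, Polynomial.coeff_sub, Polynomial.coeff_X_mul,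
        Polynomial.finset_sum_coeff] at hcoeff
      have hz1 : (A (n0 - 1) sidx).coeff (m + 1) = 0 := by
        apply Polynomial.coeff_eq_zero_of_natDegree_lt
        have hle : (n0 - 1 - s) / r < m + 1 := by
          rw [Nat.div_lt_iff_lt_mul hr]
          rw [hn0]
          generalize m * r = t at *
          omega
        exact lt_of_le_of_lt (hB _) hle
      have hz2 : ∑ j ∈ Finset.range r,
          a (n0 + j - 1) j * (A (n0 + j) sidx).coeff (m + 1) = 0 := by
        refine Finset.sum_eq_zero (fun j hj => ?_)
        have hj' := Finset.mem_range.mp hj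
        have hc : (A (n0 + j) sidx).coeff (m + 1) = 0 := by
          apply Polynomial.coeff_eq_zero_of_natDegree_lt
          have hle : (n0 + j - s) / r < m + 1 := by
            rw [Nat.div_lt_iff_lt_mul hr]
            rw [hn0, Nat.succ_mul]
            generalize m * r = t at *
            omega
          exact lt_of_le_of_lt (hB _) hle
        rw [hc, mul_zero]
      rw [hz1, hz2, sub_zero, sub_zero, ihm] at hcoeff
      have ha : a (n0 + r - 1) r ≠ 0 := har _ hnr
      have heq : (A (n0 + r) sidx).coeff (m + 1)
          = ((A s sidx).coeff 0 / ∏ i ∈ Finset.Icc 1 m, a (i * r + sidx.val) r)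
            / a (n0 + r - 1) r := by
        rw [eq_div_iff ha, mul_comm]
        exact hcoeff
      rw [Finset.prod_Icc_succ_top (Nat.le_add_left 1 m), ← hidx, ← hidx2, heq, div_div]
  -- conclude
  have hns : m * r + sidx.val + 1 = m * r + s := add_assoc _ _ _
  have hmc : (A (m * r + s) sidx).coeff m ≠ 0 := by
    rw [hC m]
    apply div_ne_zero hc0
    refine Finset.prod_ne_zero_iff.mpr (fun i hi => ?_)
    have hi1 : 1 ≤ i := (Finset.mem_Icc.mp hi).1
    exact har _ (le_trans (by omega) (Nat.le_add_right (1 * r) _ |>.trans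
      (by exact Nat.add_le_add_right (Nat.mul_le_mul_right r hi1) _)))
  have hne : A (m * r + s) sidx ≠ 0 := fun h => hmc (by rw [h]; simp)
  have hdeg : (A (m * r + s) sidx).natDegree = m := by
    refine le_antisymm ?_ (Polynomial.le_natDegree_of_ne_zero hmc)
    have := hB (m * r + s)
    rwa [Nat.add_sub_cancel, Nat.mul_div_cancel m hr] at this
  rw [hns]
  refine ⟨hne, hdeg, ?_⟩
  rw [Polynomial.leadingCoeff, hdeg, hC m]
end

section
/- Sharpness of multiple Gaussian quadrature: under the same hypotheses, the interpolatory quadrature rules with nodes at the zeros of P_n do not have vector order (n−1)e + ν_{n+1}; that is, there exists j and a polynomial h of degree ≤ n − 1 + ν_{n+1}(j) such that ∫ h dμ_j ≠ Σ_ℓ w^{(j)}_{ℓ,n} h(x_{ℓ,n}). -/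
open Polynomial

/-- sharpness of multiple Gaussian quadrature: the interpolatory rules with
nodes at the simple zeros of `P_n` do not have vector order `(n−1)e + ν_{n+1}`: there is a
`j` and a polynomial `h` of degree at most `n − 1 + ν_{n+1}(j)` on which the `j`-th rule is
not exact. -/
theorem multiple_gaussian_quadrature_sharp (r : ℕ) (hr : 0 < r)
    (μ : Fin r → (Polynomial ℂ →ₗ[ℂ] ℂ)) (hwc : WeaklyComplete r μ)
    (n : ℕ) (hn : 0 < n) (P : Polynomial ℂ)
    (hmonic : P.Monic) (hdeg : P.natDegree = n)
    (horth : TypeIISol r μ n P)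
    (x : Fin n → ℂ) (hinj : Function.Injective x)
    (hzeros : P = ∏ ℓ : Fin n, (X - C (x ℓ))) :
    ∃ j : Fin r, ∃ h : Polynomial ℂ, h.natDegree ≤ n - 1 + properIndex r (n + 1) j ∧
      μ j h ≠ ∑ ℓ : Fin n, μ j (Lagrange.basis Finset.univ x ℓ) * h.eval (x ℓ) := by
  have hP0 : P ≠ 0 := hmonic.ne_zero
  have hnot : ¬ TypeIISol r μ (n+1) P := by
    intro hsol
    rcases (hwc (n+1)).1 P hsol with h0 | hd
    · exact hP0 h0
    · omega
  rw [TypeIISol] at hnot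
  push_neg at hnot
  have hdegle : P.degree ≤ ((n+1 : ℕ) : WithBot ℕ) := by
    refine le_trans horth.1 ?_
    exact_mod_cast Nat.le_succ n
  obtain ⟨j, ℓ, hℓ, hne⟩ := hnot hdegle
  refine ⟨j, X ^ ℓ * P, ?_, ?_⟩
  · rw [Polynomial.natDegree_mul (pow_ne_zero _ X_ne_zero) hP0, natDegree_X_pow, hdeg]
    omega
  · have heval : ∀ k : Fin n, P.eval (x k) = 0 := by
      intro k
      rw [hzeros, eval_prod]
      exact Finset.prod_eq_zero (Finset.mem_univ k) (by simp)
  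
    have hz : ∀ k : Fin n, (X ^ ℓ * P).eval (x k) = 0 := by
      intro k; simp [heval k]
    simp only [hz, mul_zero, Finset.sum_const_zero]
    exact hne
end

section
/- Eigenvector formula for multiple Gaussian weights: let x_{ℓ,n} be a simple zero of P_n, v_{ℓ,n} the right eigenvector of L_n for x_{ℓ,n} normalized to have first component 1, and u_{ℓ,n} the left eigenvector whose first nonzero component (at position k_ℓ ≤ min(r,n)) equals 1. Then u_{ℓ,n}^T v_{ℓ,n} ≠ 0, and the interpolatory quadrature weights satisfy w^{(j)}_{ℓ,n} = (1/(u_{ℓ,n}^T v_{ℓ,n})) Σ_{k=1}^{min(j,n)} C_{j,k} u_{ℓ,n}(k) for j = 1,...,r, where C_{j,k} = ∫ P_{k−1}(x) dμ_j(x). Moreover C_{j,j} ≠ 0 for j = 1,...,r and w^{(j)}_{ℓ,n} = 0 for j = 1,...,k_ℓ−1. -/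
open Polynomial

/-- The `n × n` banded lower Hessenberg matrix `L_n` with superdiagonal entries `1` and
entries `a_{i,j}` on the `j`-th subdiagonal for `j ≤ r`. -/
def hessenberg (r n : ℕ) (a : ℕ → ℕ → ℂ) : Matrix (Fin n) (Fin n) ℂ :=
  Matrix.of fun i k =>
    if i.val + 1 = k.val then 1
    else if k.val ≤ i.val ∧ i.val - k.val ≤ r then a i.val (i.val - k.val) else 0

lemma aux_pi {r : ℕ} (hr : 0 < r) (m : ℕ) (i : Fin r) (ℓ : ℕ) :
    ℓ < properIndex r m i ↔ r * ℓ + i.val + 1 ≤ m := by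
  have hi := i.isLt
  rw [properIndex, Nat.lt_iff_add_one_le, Nat.le_div_iff_mul_le hr, add_mul, one_mul, mul_comm ℓ r]
  omega

lemma aux_orth {r : ℕ} (hr : 0 < r) {μ : Fin r → (Polynomial ℂ →ₗ[ℂ] ℂ)}
    {P : ℕ → Polynomial ℂ} (horth : ∀ m, TypeIISol r μ m (P m))
    (i : Fin r) (ℓ m : ℕ) (h : r * ℓ + i.val + 1 ≤ m) : μ i (X ^ ℓ * P m) = 0 :=
  (horth m).2 i ℓ ((aux_pi hr m i ℓ).2 h)

lemma aux_orth0 {r : ℕ} (hr : 0 < r) {μ : Fin r → (Polynomial ℂ →ₗ[ℂ] ℂ)}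
    {P : ℕ → Polynomial ℂ} (horth : ∀ m, TypeIISol r μ m (P m))
    (i : Fin r) (m : ℕ) (h : i.val + 1 ≤ m) : μ i (P m) = 0 := by
  have := aux_orth hr horth i 0 m (by omega)
  rwa [pow_zero, one_mul] at this

lemma aux_anr {r : ℕ} (hr : 0 < r) {μ : Fin r → (Polynomial ℂ →ₗ[ℂ] ℂ)}
    (hwc : WeaklyComplete r μ) {P : ℕ → Polynomial ℂ}
    (hmonic : ∀ m, (P m).Monic) (hdeg : ∀ m, (P m).natDegree = m)
    (horth : ∀ m, TypeIISol r μ m (P m)) {a : ℕ → ℕ → ℂ}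
    (hPrec : ∀ m, X * P m = P (m + 1) +
      ∑ j ∈ Finset.range (r + 1), a m j • (if j ≤ m then P (m - j) else 0))
    (m : ℕ) (hm : r ≤ m) : a m r ≠ 0 := by
  intro h0
  have hsol : TypeIISol r μ (m + 1) (P m) := by
    constructor
    · refine degree_le_natDegree.trans ?_
      rw [hdeg]
      exact_mod_cast Nat.le_succ m
    · intro i ℓ hℓ
      rw [aux_pi hr] at hℓ
      by_cases hc : r * ℓ + i.val + 1 ≤ m
      · exact aux_orth hr horth i ℓ m hc
      · have heq : r * ℓ + i.val = m := by omega
        have hi := i.isLt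
        obtain ⟨t, rfl⟩ : ∃ t, ℓ = t + 1 := by
          cases ℓ with
          | zero => simp at heq; omega
          | succ t => exact ⟨t, rfl⟩
        rw [Nat.mul_succ] at heq
        rw [show X ^ (t+1) * P m = X ^ t * (X * P m) by ring, hPrec m,
          mul_add, map_add, Finset.mul_sum, map_sum]
        have h1 : μ i (X ^ t * P (m + 1)) = 0 := aux_orth hr horth i t (m + 1) (by omega)
        rw [h1, zero_add]
        apply Finset.sum_eq_zero
        intro j hj
        simp only [Finset.mem_range] at hj
        rw [if_pos (by omega : j ≤ m), mul_smul_comm, map_smul, smul_eq_mul]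
        by_cases hjr : j = r
        · subst hjr; rw [h0, zero_mul]
        · rw [aux_orth hr horth i t (m - j) (by omega), mul_zero]
  rcases (hwc (m + 1)).1 (P m) hsol with h | h
  · exact (hmonic m).ne_zero h
  · rw [hdeg] at h; omega

lemma aux_indep {P : ℕ → Polynomial ℂ} (hmonic : ∀ m, (P m).Monic)
    (hdeg : ∀ m, (P m).natDegree = m) {n : ℕ} (u : Fin n → ℂ)
    (hf : ∑ i : Fin n, C (u i) * P i.val = 0) : u = 0 := by
  by_contra hne
  obtain ⟨i0, hi0⟩ : ∃ i, u i ≠ 0 := by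
    by_contra h
    push_neg at h
    exact hne (funext h)
  set s : Finset (Fin n) := Finset.univ.filter (fun i => u i ≠ 0) with hs
  have hsne : s.Nonempty := ⟨i0, by simp [hs, hi0]⟩
  obtain ⟨M, hMs, hMmax⟩ := s.exists_max_image (fun i => i.val) hsne
  have hM : u M ≠ 0 := by simpa [hs] using hMs
  have hc : (∑ i : Fin n, C (u i) * P i.val).coeff M.val = u M := by
    rw [finset_sum_coeff, Finset.sum_eq_single M]
    · rw [coeff_C_mul]
      have : (P M.val).coeff M.val = 1 := by
        have h2 := (hmonic M.val).coeff_natDegree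
        rwa [hdeg] at h2
      rw [this, mul_one]
    · intro i _ hiM
      by_cases hui : u i = 0
      · simp [hui]
      · have hle : i.val ≤ M.val := hMmax i (by simp [hs, hui])
        have hlt : i.val < M.val := lt_of_le_of_ne hle (fun h => hiM (Fin.ext h))
        rw [coeff_C_mul, coeff_eq_zero_of_natDegree_lt (by rw [hdeg]; exact hlt), mul_zero]
    · intro h; exact absurd (Finset.mem_univ M) h
  rw [hf, coeff_zero] at hc
  exact hM hc.symm

lemma aux_row {r n : ℕ} (a : ℕ → ℕ → ℂ) (E : ℕ → ℂ) (i' : Fin n) :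
    ∑ i : Fin n, hessenberg r n a i' i * E i.val =
      (if i'.val + 1 < n then E (i'.val + 1) else 0) +
        ∑ j ∈ Finset.range (r + 1), a i'.val j * (if j ≤ i'.val then E (i'.val - j) else 0) := by
  have hsplit : ∀ i : Fin n, hessenberg r n a i' i * E i.val =
      (if i'.val + 1 = i.val then E i.val else 0) +
      (if i.val ≤ i'.val ∧ i'.val - i.val ≤ r then a i'.val (i'.val - i.val) * E i.val else 0) := by
    intro i
    simp only [hessenberg, Matrix.of_apply]
    split_ifs <;> (try omega) <;> ring
  rw [Finset.sum_congr rfl (fun i _ => hsplit i), Finset.sum_add_distrib]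
  congr 1
  · by_cases h : i'.val + 1 < n
    · rw [if_pos h, Finset.sum_eq_single (⟨i'.val + 1, h⟩ : Fin n)]
      · rw [if_pos rfl]
      · intro b _ hb
        rw [if_neg (fun hc => hb (Fin.ext hc.symm))]
      · intro h'; exact absurd (Finset.mem_univ _) h'
    · rw [if_neg h]
      apply Finset.sum_eq_zero
      intro b _
      have := b.isLt
      rw [if_neg (by omega)]
  · rw [Fin.sum_univ_eq_sum_range (fun i => if i ≤ i'.val ∧ i'.val - i ≤ r then a i'.val (i'.val - i) * E i else 0) n]
    simp only [mul_ite, mul_zero]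
    rw [← Finset.sum_filter, ← Finset.sum_filter]
    apply Finset.sum_bij' (i := fun (i : ℕ) (_ : i ∈ (Finset.range n).filter
        (fun i => i ≤ i'.val ∧ i'.val - i ≤ r)) => i'.val - i)
      (j := fun (j : ℕ) (_ : j ∈ (Finset.range (r+1)).filter (fun j => j ≤ i'.val)) => i'.val - j)
    · intro i hi
      simp only [Finset.mem_filter, Finset.mem_range] at hi ⊢
      omega
    · intro j hj
      have hn' := i'.isLt
      simp only [Finset.mem_filter, Finset.mem_range] at hj ⊢
      omega
    · intro i hi
      simp only [Finset.mem_filter, Finset.mem_range] at hi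
      omega
    · intro j hj
      simp only [Finset.mem_filter, Finset.mem_range] at hj
      omega
    · intro i hi
      simp only [Finset.mem_filter, Finset.mem_range] at hi
      have h1 : i'.val - (i'.val - i) = i := by omega
      rw [h1]

lemma aux_identity {r : ℕ} {P : ℕ → Polynomial ℂ} {a : ℕ → ℕ → ℂ}
    (hPrec : ∀ m, X * P m = P (m + 1) +
      ∑ j ∈ Finset.range (r + 1), a m j • (if j ≤ m then P (m - j) else 0))
    {n : ℕ} (hn : 0 < n) (u : Fin n → ℂ) (z : ℂ)
    (hu : Matrix.vecMul u (hessenberg r n a) = z • u) :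
    (X - C z) * (∑ i : Fin n, C (u i) * P i.val) =
      C (u ⟨n - 1, by omega⟩) * P n := by
  apply Polynomial.funext
  intro y
  set E : ℕ → ℂ := fun m => (P m).eval y with hE
  set R : ℕ → ℂ := fun m => ∑ j ∈ Finset.range (r + 1), a m j * (if j ≤ m then E (m - j) else 0) with hR
  have hrec : ∀ m : ℕ, y * E m = E (m + 1) + R m := by
    intro m
    have h := congrArg (eval y) (hPrec m)
    simpa [hE, hR, apply_ite (eval y), eval_finset_sum] using h
  have hvec : ∀ m : Fin n, z * u m = ∑ i : Fin n, u i * hessenberg r n a i m := by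
    intro m
    have h := congrFun hu m
    simp only [Matrix.vecMul, dotProduct, Pi.smul_apply, smul_eq_mul] at h
    rw [← h]
  have hS : eval y (∑ i : Fin n, C (u i) * P i.val) = ∑ i : Fin n, u i * E i.val := by
    simp [eval_finset_sum, hE]
  rw [eval_mul, eval_mul, eval_sub, eval_X, eval_C, eval_C, hS]
  have hy : y * ∑ i : Fin n, u i * E i.val = ∑ i : Fin n, u i * (E (i.val + 1) + R i.val) := by
    rw [Finset.mul_sum]
    exact Finset.sum_congr rfl fun i _ => by rw [← hrec i.val]; ring
  have hz : z * ∑ i : Fin n, u i * E i.val =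
      ∑ i : Fin n, u i * ((if i.val + 1 < n then E (i.val + 1) else 0) + R i.val) := by
    calc z * ∑ i : Fin n, u i * E i.val = ∑ i : Fin n, (z * u i) * E i.val := by
          rw [Finset.mul_sum]; exact Finset.sum_congr rfl fun i _ => by ring
      _ = ∑ i : Fin n, (∑ i' : Fin n, u i' * hessenberg r n a i' i) * E i.val := by
          exact Finset.sum_congr rfl fun i _ => by rw [← hvec i]
      _ = ∑ i' : Fin n, u i' * ∑ i : Fin n, hessenberg r n a i' i * E i.val := by
          simp only [Finset.sum_mul]
          rw [Finset.sum_comm]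
          exact Finset.sum_congr rfl fun i' _ => by
            rw [Finset.mul_sum]; exact Finset.sum_congr rfl fun i _ => by ring
      _ = ∑ i : Fin n, u i * ((if i.val + 1 < n then E (i.val + 1) else 0) + R i.val) := by
          exact Finset.sum_congr rfl fun i' _ => by rw [aux_row]
  rw [sub_mul, hy, hz, ← Finset.sum_sub_distrib]
  have hlast : ∀ i : Fin n, i ≠ ⟨n - 1, by omega⟩ → i.val + 1 < n := by
    intro i hi
    have h1 := i.isLt
    have h2 : i.val ≠ n - 1 := fun h => hi (Fin.ext h)
    omega
  rw [Finset.sum_eq_single (⟨n - 1, by omega⟩ : Fin n)]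
  · simp only [Fin.val_mk]
    rw [if_neg (by omega), show n - 1 + 1 = n by omega]
    ring
  · intro i _ hi
    rw [if_pos (hlast i hi)]
    ring
  · intro h; exact absurd (Finset.mem_univ _) h

open Matrix in
/-- eigenvector formula for the multiple Gaussian quadrature weights.  Let
`x ℓ` be a simple zero of `P_n`, `v` the right eigenvector of `L_n` normalized by `v 0 = 1`
(i.e. `v = (P_0(x ℓ),…,P_{n−1}(x ℓ))`), and `u` the left eigenvector whose first nonzero
component, at (0-based) position `k`, equals `1`.  Then `k+1 ≤ min(r,n)`, `uᵀv ≠ 0`, the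
interpolatory weights satisfy
`w^{(j)}_ℓ = (1/(uᵀv)) ∑_{k'=1}^{min(j,n)} C_{j,k'} u(k')` with `C_{j,k'} = ∫ P_{k'−1} dμ_j`,
the constants `C_{j,j}` are nonzero, and `w^{(j)}_ℓ = 0` for `j = 1,…,k`. -/
theorem multiple_gauss_weights_eigenvector (r : ℕ) (hr : 0 < r)
    (μ : Fin r → (Polynomial ℂ →ₗ[ℂ] ℂ)) (hwc : WeaklyComplete r μ)
    (P : ℕ → Polynomial ℂ)
    (hmonic : ∀ m, (P m).Monic) (hdeg : ∀ m, (P m).natDegree = m)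
    (horth : ∀ m, TypeIISol r μ m (P m))
    (a : ℕ → ℕ → ℂ)
    (hPrec : ∀ m, X * P m = P (m + 1) +
      ∑ j ∈ Finset.range (r + 1), a m j • (if j ≤ m then P (m - j) else 0))
    (n : ℕ) (hn : 0 < n)
    (x : Fin n → ℂ) (hinj : Function.Injective x)
    (hzeros : P n = ∏ t : Fin n, (X - C (x t)))
    (ℓ : Fin n)
    (u : Fin n → ℂ) (hu : Matrix.vecMul u (hessenberg r n a) = x ℓ • u)
    (hune : u ≠ 0) (k : Fin n) (hk1 : u k = 1) (hk0 : ∀ i : Fin n, i < k → u i = 0) :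
    k.val + 1 ≤ min r n ∧
    (u ⬝ᵥ fun i : Fin n => (P i.val).eval (x ℓ)) ≠ 0 ∧
    (∀ j : Fin r,
      μ j (Lagrange.basis Finset.univ x ℓ) =
        (1 / (u ⬝ᵥ fun i : Fin n => (P i.val).eval (x ℓ))) *
          ∑ k' ∈ Finset.univ.filter (fun k' : Fin n => k'.val ≤ j.val),
            μ j (P k'.val) * u k') ∧
    (∀ j : Fin r, μ j (P j.val) ≠ 0) ∧
    (∀ j : Fin r, j.val < k.val → μ j (Lagrange.basis Finset.univ x ℓ) = 0) := by
  
  -- Part 1 : the first nonzero entry of `u` sits at position `< r`.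
  have hkr : k.val < r := by
    by_contra hge
    push_neg at hge
    have hm : k.val - r < n := lt_of_le_of_lt (Nat.sub_le _ _) k.isLt
    have hcol := congrFun hu ⟨k.val - r, hm⟩
    simp only [Matrix.vecMul, dotProduct, Pi.smul_apply, smul_eq_mul] at hcol
    have hum : u ⟨k.val - r, hm⟩ = 0 := hk0 _ (by simp only [Fin.lt_def, Fin.val_mk]; omega)
    rw [Finset.sum_eq_single k] at hcol
    · rw [hk1, one_mul, hum, mul_zero] at hcol
      have hval : hessenberg r n a k ⟨k.val - r, hm⟩ = a k.val r := by
        simp only [hessenberg, Matrix.of_apply, Fin.val_mk]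
        rw [if_neg (by omega), if_pos ⟨by omega, by omega⟩]
        congr 1
        omega
      rw [hval] at hcol
      exact aux_anr hr hwc hmonic hdeg horth hPrec k.val hge hcol
    · intro i _ hik
      rcases lt_trichotomy i k with h | h | h
      · rw [hk0 i h, zero_mul]
      · exact absurd h hik
      · have hik' : k.val < i.val := h
        simp only [hessenberg, Matrix.of_apply, Fin.val_mk]
        rw [if_neg (by omega), if_neg (by omega), mul_zero]
    · intro h; exact absurd (Finset.mem_univ _) h
  -- setup
  set D := u ⬝ᵥ fun i : Fin n => (P i.val).eval (x ℓ) with hDdef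
  set f := ∑ i : Fin n, C (u i) * P i.val with hf
  set c := u ⟨n - 1, by omega⟩ with hcdef
  have hid : (X - C (x ℓ)) * f = C c * P n := aux_identity hPrec hn u (x ℓ) hu
  set Q := ∏ t ∈ Finset.univ.erase ℓ, (X - C (x t)) with hQ
  have hPn : P n = (X - C (x ℓ)) * Q := by
    rw [hzeros, hQ, ← Finset.mul_prod_erase Finset.univ _ (Finset.mem_univ ℓ)]
  have hfac : f = C c * Q := by
    apply mul_left_cancel₀ (X_sub_C_ne_zero (x ℓ))
    rw [hid, hPn]
    ring
  have hDeval : D = c * ∏ t ∈ Finset.univ.erase ℓ, (x ℓ - x t) := by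
    have h1 : D = eval (x ℓ) f := by
      rw [hDdef, hf]
      simp [dotProduct, eval_finset_sum]
    rw [h1, hfac, hQ]
    simp [eval_prod]
  have hprodne : (∏ t ∈ Finset.univ.erase ℓ, (x ℓ - x t)) ≠ 0 := by
    apply Finset.prod_ne_zero_iff.2
    intro t ht
    have htℓ : t ≠ ℓ := (Finset.mem_erase.1 ht).1
    exact sub_ne_zero.2 fun h => htℓ (hinj h).symm
  have hDne : D ≠ 0 := by
    intro h0
    rw [hDeval] at h0
    rcases mul_eq_zero.1 h0 with hc0 | hp
    · have hf0 : f = 0 := by rw [hfac, hc0]; simp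
      exact hune (aux_indep hmonic hdeg u (by rw [← hf]; exact hf0))
    · exact hprodne hp
  have hcne : c ≠ 0 := fun h => hDne (by rw [hDeval, h, zero_mul])
  have hbasis : Lagrange.basis Finset.univ x ℓ = C D⁻¹ * f := by
    rw [hfac, hDeval]
    unfold Lagrange.basis Lagrange.basisDivisor
    rw [hQ, Finset.prod_mul_distrib, ← map_prod, ← mul_assoc, ← _root_.map_mul]
    congr 2
    rw [Finset.prod_inv_distrib, mul_inv, mul_comm (c⁻¹) _, mul_assoc,
      inv_mul_cancel₀ hcne, mul_one]
  have hmu : ∀ j : Fin r, μ j (Lagrange.basis Finset.univ x ℓ) =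
      (1 / D) * ∑ k' ∈ Finset.univ.filter (fun k' : Fin n => k'.val ≤ j.val),
        μ j (P k'.val) * u k' := by
    intro j
    rw [hbasis, ← Polynomial.smul_eq_C_mul, _root_.map_smul, smul_eq_mul, one_div]
    congr 1
    have h1 : μ j f = ∑ i : Fin n, μ j (P i.val) * u i := by
      rw [hf, map_sum]
      exact Finset.sum_congr rfl fun i _ => by
        rw [← Polynomial.smul_eq_C_mul, _root_.map_smul, smul_eq_mul]; ring
    rw [h1]
    refine (Finset.sum_filter_of_ne ?_).symm
    intro i _ hne
    by_contra hgt
    exact hne (by rw [aux_orth0 hr horth j i.val (by omega), zero_mul])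
  refine ⟨le_min (by omega) k.isLt, hDne, hmu, ?_, ?_⟩
  · -- C_{j,j} ≠ 0
    intro j h0
    have hsol : TypeIISol r μ (j.val + 1) (P j.val) := by
      constructor
      · refine degree_le_natDegree.trans ?_
        rw [hdeg]
        exact_mod_cast Nat.le_succ j.val
      · intro i t ht
        rw [aux_pi hr] at ht
        by_cases hlt : r * t + i.val + 1 ≤ j.val
        · exact aux_orth hr horth i t j.val hlt
        · have h1 : r * t + i.val = j.val := by omega
          have hi := i.isLt
          have hj := j.isLt
          have ht0 : t = 0 := by
            by_contra h
            have h2 : r ≤ r * t := Nat.le_mul_of_pos_right r (by omega)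
            omega
          subst ht0
          have hij : i = j := Fin.ext (by omega)
          rw [pow_zero, one_mul, hij]
          exact h0
    rcases (hwc (j.val + 1)).1 _ hsol with h | h
    · exact (hmonic j.val).ne_zero h
    · rw [hdeg] at h; omega
  · -- vanishing of the first weights
    intro j hjk
    rw [hmu j]
    have hz : (∑ k' ∈ Finset.univ.filter (fun k' : Fin n => k'.val ≤ j.val),
        μ j (P k'.val) * u k') = 0 := by
      apply Finset.sum_eq_zero
      intro i hi
      have hi' : i.val ≤ j.val := (Finset.mem_filter.1 hi).2
      rw [hk0 i (by rw [Fin.lt_def]; omega), mul_zero]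
    rw [hz, mul_zero]
end

section
/- Duality between type I initial values and first moments of type II polynomials: with C_{j,k} = ∫ P_{k−1} dμ_j and A_{i,j} the components of the type I initial vector polynomials (1 ≤ j ≤ i ≤ r), one has Σ_{j=k}^{i} A_{i,j} C_{j,k} = δ_{ik} for all 1 ≤ k ≤ i ≤ r; consequently the upper triangular matrix (C_{j,k}) and the lower triangular matrix (A_{i,j}) determine each other uniquely via these triangular linear systems, given C_{j,j} ≠ 0 and A_{j,j} ≠ 0. -/
open Polynomial

/-- duality between the type I initial values and the first moments of the
type II polynomials: with `C_{j,k} = ∫ P_{k−1} dμ_j` and `A_{i,j}` the (constant) components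
of the initial type I vector polynomials, `∑_{j=k}^{i} A_{i,j} C_{j,k} = δ_{ik}` for all
`1 ≤ k ≤ i ≤ r`. -/
theorem typeI_initial_moments_duality (r : ℕ) (hr : 0 < r)
    (μ : Fin r → (Polynomial ℂ →ₗ[ℂ] ℂ)) (hwc : WeaklyComplete r μ)
    (P : ℕ → Polynomial ℂ)
    (hmonic : ∀ n, (P n).Monic) (hdeg : ∀ n, (P n).natDegree = n)
    (horth : ∀ n, TypeIISol r μ n (P n))
    (A : ℕ → Fin r → Polynomial ℂ) (hA : TypeINormalized r μ A) :
    ∀ i k : Fin r, k ≤ i →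
      ∑ j ∈ Finset.Icc k i, (A (i.val + 1) j).coeff 0 * μ j (P k.val) =
        if k = i then 1 else 0 := by
  intro i k hki
  obtain ⟨hdegA, hvan, hnorm⟩ := hA (i.val + 1) (by omega)
  set c : Fin r → ℂ := fun j => (A (i.val + 1) j).coeff 0 with hc
  -- proper index at level i+1
  have hpi : ∀ j : Fin r, properIndex r (i.val + 1) j = if j.val ≤ i.val then 1 else 0 := by
    intro j
    unfold properIndex
    rcases le_or_gt j.val i.val with h | h
    · rw [if_pos h]
      have he : i.val + 1 + r - 1 - j.val = r + (i.val - j.val) := by omega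
      rw [he]
      exact Nat.div_eq_of_lt_le (by omega) (by have := i.isLt; omega)
    · rw [if_neg (by omega)]
      exact Nat.div_eq_of_lt (by have := j.isLt; omega)
  -- A (i+1) j is the constant c j
  have hAconst : ∀ j : Fin r, A (i.val + 1) j = C (c j) := by
    intro j
    have h := hdegA j
    rw [hpi j] at h
    rcases le_or_gt j.val i.val with h' | h'
    · rw [if_pos h'] at h
      have h0 : (A (i.val + 1) j).degree ≤ 0 :=
        Nat.WithBot.lt_one_iff_le_zero.mp (by simpa using h)
      rw [Polynomial.eq_C_of_degree_le_zero h0]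
    · rw [if_neg (by omega)] at h
      have h0 : A (i.val + 1) j = 0 := by
        rw [← Polynomial.degree_eq_bot]
        exact Nat.WithBot.lt_zero_iff.mp (by simpa using h)
      simp [hc, h0]
  have hAzero : ∀ j : Fin r, i.val < j.val → c j = 0 := by
    intro j hj
    have h := hdegA j
    rw [hpi j, if_neg (by omega)] at h
    have h0 : A (i.val + 1) j = 0 := by
      rw [← Polynomial.degree_eq_bot]
      exact Nat.WithBot.lt_zero_iff.mp (by simpa using h)
    simp [hc, h0]
  -- first moments of P k vanish for j < k
  have hμzero : ∀ j : Fin r, j.val < k.val → μ j (P k.val) = 0 := by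
    intro j hj
    have hlt : 0 < properIndex r k.val j := by
      unfold properIndex
      exact (Nat.one_le_div_iff hr).mpr (by omega)
    have h := (horth k.val).2 j 0 hlt
    simpa using h
  -- extend the sum to all of Fin r
  have hsum : ∑ j ∈ Finset.Icc k i, c j * μ j (P k.val)
      = ∑ j : Fin r, c j * μ j (P k.val) := by
    refine Finset.sum_subset (f := fun j => c j * μ j (P k.val)) (Finset.subset_univ _) ?_
    intro j _ hj
    rw [Finset.mem_Icc, not_and_or] at hj
    rcases hj with hj | hj
    · rw [hμzero j (Fin.lt_iff_val_lt_val.mp (lt_of_not_ge hj)), mul_zero]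
    · rw [hAzero j (Fin.lt_iff_val_lt_val.mp (lt_of_not_ge hj)), zero_mul]
  -- the functional L(X^ℓ)
  have hmul : ∀ (j : Fin r) (Q : Polynomial ℂ), μ j (Q * A (i.val + 1) j) = c j * μ j Q := by
    intro j Q
    rw [hAconst j]
    have : Q * C (c j) = c j • Q := by
      rw [Polynomial.smul_eq_C_mul, mul_comm]
    rw [this, map_smul, smul_eq_mul]
  have hL : ∀ ℓ : ℕ, ℓ ≤ i.val →
      ∑ j : Fin r, c j * μ j (X ^ ℓ) = if ℓ = i.val then 1 else 0 := by
    intro ℓ hℓ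
    rcases eq_or_lt_of_le hℓ with h | h
    · rw [if_pos h]
      have := hnorm
      simp only [Nat.add_sub_cancel] at this
      rw [← this]
      subst h
      exact Finset.sum_congr rfl fun j _ => (hmul j _).symm
    · rw [if_neg (by omega)]
      have := hvan ℓ (by omega)
      rw [← this]
      exact Finset.sum_congr rfl fun j _ => (hmul j _).symm
  rw [hsum]
  -- expand P k in the monomial basis
  have hrep : P k.val = ∑ ℓ ∈ Finset.range (k.val + 1), C ((P k.val).coeff ℓ) * X ^ ℓ := by
    conv_lhs => rw [(P k.val).as_sum_range' (k.val + 1) (by rw [hdeg]; omega)]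
    exact Finset.sum_congr rfl fun ℓ _ => (Polynomial.C_mul_X_pow_eq_monomial).symm
  calc ∑ j : Fin r, c j * μ j (P k.val)
      = ∑ j : Fin r, c j * ∑ ℓ ∈ Finset.range (k.val + 1), (P k.val).coeff ℓ * μ j (X ^ ℓ) := by
        refine Finset.sum_congr rfl fun j _ => ?_
        congr 1
        conv_lhs => rw [hrep]
        rw [map_sum]
        refine Finset.sum_congr rfl fun ℓ _ => ?_
        rw [← Polynomial.smul_eq_C_mul, map_smul, smul_eq_mul]
    _ = ∑ ℓ ∈ Finset.range (k.val + 1), (P k.val).coeff ℓ * ∑ j : Fin r, c j * μ j (X ^ ℓ) := by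
        simp_rw [Finset.mul_sum]
        rw [Finset.sum_comm]
        exact Finset.sum_congr rfl fun ℓ _ => Finset.sum_congr rfl fun j _ => by ring
    _ = ∑ ℓ ∈ Finset.range (k.val + 1), (P k.val).coeff ℓ * (if ℓ = i.val then 1 else 0) := by
        refine Finset.sum_congr rfl fun ℓ hℓ => ?_
        rw [hL ℓ (by simp at hℓ; have := Fin.le_iff_val_le_val.mp hki; omega)]
    _ = if k = i then 1 else 0 := by
        rcases eq_or_ne k i with hk | hk
        · subst hk
          rw [if_pos rfl]
          rw [Finset.sum_eq_single k.val]
          · rw [if_pos rfl, mul_one]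
            have := hmonic k.val
            rw [Polynomial.Monic, Polynomial.leadingCoeff, hdeg] at this
            exact this
          · intro b _ hb; rw [if_neg hb, mul_zero]
          · intro h; exact absurd (Finset.self_mem_range_succ k.val) h
        · rw [if_neg hk]
          refine Finset.sum_eq_zero fun ℓ hℓ => ?_
          rw [if_neg ?_, mul_zero]
          simp only [Finset.mem_range] at hℓ
          have hki' := Fin.le_iff_val_le_val.mp hki
          have : k.val ≠ i.val := fun h => hk (Fin.ext h)
          omega
end

section
/- Multiple Gaussian quadrature as discrete multiple orthogonality: under multiple Gaussian quadrature with nodes the simple zeros of P_n and interpolatory weights w^{(j)}_{ℓ,n}, the discrete measures μ_{j,n} = Σ_{ℓ=1}^{n} w^{(j)}_{ℓ,n} δ_{x_{ℓ,n}} admit A_1,...,A_n as type I and P_0,...,P_{n−1} as type II multiple orthogonal polynomials: all orthogonality conditions ∫ x^ℓ Σ_j A_{k,j} dμ_{j,n} = 0 (ℓ ≤ k−2), the normalizations ∫ x^{k−1} Σ_j A_{k,j} dμ_{j,n} = 1 (k ≤ n), and ∫ P_m x^ℓ dμ_{j,n} = 0 (ℓ < ν_m(j), m ≤ n−1) hold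 with the original measures replaced by μ_{j,n}. -/
open Polynomial

lemma prod_dvd_of_eval_zero {ι : Type*} [DecidableEq ι] (s : Finset ι) (v : ι → ℂ)
    (hinj : Set.InjOn v s) (p : Polynomial ℂ) (h : ∀ i ∈ s, p.eval (v i) = 0) :
    (∏ i ∈ s, (X - C (v i))) ∣ p := by
  induction s using Finset.induction generalizing p with
  | empty => simpa using one_dvd p
  | @insert i s hi ih =>
    have hri : X - C (v i) ∣ p := dvd_iff_isRoot.mpr (h i (Finset.mem_insert_self i s))
    obtain ⟨q, hq⟩ := hri
    have hq0 : ∀ j ∈ s, q.eval (v j) = 0 := by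
      intro j hj
      have hne : v j - v i ≠ 0 := by
        refine sub_ne_zero_of_ne fun hEq => hi ?_
        have := hinj (Finset.mem_insert_of_mem hj) (Finset.mem_insert_self i s) hEq
        rwa [this] at hj
      have h2 : (v j - v i) * q.eval (v j) = 0 := by
        have := h j (Finset.mem_insert_of_mem hj)
        rw [hq] at this; simpa using this
      rcases mul_eq_zero.mp h2 with h3 | h3
      · exact absurd h3 hne
      · exact h3
    have hdvd : (∏ j ∈ s, (X - C (v j))) ∣ q :=
      ih (hinj.mono (fun a ha => Finset.mem_insert_of_mem ha)) q hq0
    obtain ⟨w, hw⟩ := hdvd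
    exact ⟨w, by rw [Finset.prod_insert hi, hq, hw]; ring⟩

lemma mul_orth (μj : Polynomial ℂ →ₗ[ℂ] ℂ) (p : Polynomial ℂ) (N : ℕ)
    (h : ∀ ℓ < N, μj (X ^ ℓ * p) = 0) (R : Polynomial ℂ) (hR : R.natDegree < N) :
    μj (R * p) = 0 := by
  have hrep : R * p = ∑ i ∈ Finset.range N, R.coeff i • (X ^ i * p) := by
    conv_lhs => rw [R.as_sum_range' N hR]
    rw [Finset.sum_mul]
    refine Finset.sum_congr rfl fun i _ => ?_
    rw [← C_mul_X_pow_eq_monomial, Polynomial.smul_eq_C_mul, mul_assoc]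
  rw [hrep, map_sum]
  refine Finset.sum_eq_zero fun i hi => ?_
  rw [map_smul, h i (Finset.mem_range.mp hi), smul_zero]

lemma quad_exact {n N : ℕ} (x : Fin n → ℂ) (hinj : Function.Injective x)
    (μj : Polynomial ℂ →ₗ[ℂ] ℂ) (Pn : Polynomial ℂ)
    (hP : Pn = ∏ t : Fin n, (X - C (x t)))
    (horth : ∀ ℓ < N, μj (X ^ ℓ * Pn) = 0)
    (Q : Polynomial ℂ) (hQ : Q.degree < ((n + N : ℕ) : WithBot ℕ)) :
    ∑ t : Fin n, μj (Lagrange.basis Finset.univ x t) * Q.eval (x t) = μj Q := by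
  set I := Lagrange.interpolate Finset.univ x (fun t => Q.eval (x t)) with hI
  have hstep : ∑ t : Fin n, μj (Lagrange.basis Finset.univ x t) * Q.eval (x t) = μj I := by
    rw [hI, Lagrange.interpolate_apply, map_sum]
    refine Finset.sum_congr rfl fun t _ => ?_
    rw [← Polynomial.smul_eq_C_mul, map_smul, smul_eq_mul, mul_comm]
  rw [hstep]
  have hinjOn : Set.InjOn x (Finset.univ : Finset (Fin n)) := fun a _ b _ h => hinj h
  have hroot : ∀ t ∈ (Finset.univ : Finset (Fin n)), (Q - I).eval (x t) = 0 := by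
    intro t ht
    have heq : I.eval (x t) = Q.eval (x t) := by
      rw [hI]; exact Lagrange.eval_interpolate_at_node (fun i => Q.eval (x i)) hinjOn ht
    rw [eval_sub, heq, sub_self]
  have hdvd := prod_dvd_of_eval_zero Finset.univ x hinjOn (Q - I) hroot
  rw [← hP] at hdvd
  obtain ⟨R, hR⟩ := hdvd
  by_cases h0 : Q - I = 0
  · rw [sub_eq_zero] at h0; rw [h0]
  · have hPn0 : Pn ≠ 0 := by
      rw [hP]
      exact (monic_prod_of_monic _ _ fun t _ => monic_X_sub_C (x t)).ne_zero
    have hR0 : R ≠ 0 := fun h => h0 (by rw [hR, h, mul_zero])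
    have hPdeg : Pn.natDegree = n := by
      rw [hP, natDegree_prod_of_monic _ _ fun t _ => monic_X_sub_C (x t)]
      simp
    have hIdeg : I.degree < ((n + N : ℕ) : WithBot ℕ) := by
      have h1 := Lagrange.degree_interpolate_lt (fun i => Q.eval (x i)) hinjOn
      rw [Finset.card_univ, Fintype.card_fin] at h1
      rw [← hI] at h1
      exact lt_of_lt_of_le h1 (by exact_mod_cast Nat.le_add_right n N)
    have hdegQI : (Q - I).degree < ((n + N : ℕ) : WithBot ℕ) :=
      lt_of_le_of_lt (degree_sub_le Q I) (max_lt hQ hIdeg)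
    have hnd : (Q - I).natDegree < n + N :=
      (natDegree_lt_iff_degree_lt h0).mpr hdegQI
    have hnd2 : (Q - I).natDegree = n + R.natDegree := by
      rw [hR, natDegree_mul hPn0 hR0, hPdeg]
    have hRdeg : R.natDegree < N := by omega
    have hz : μj (Q - I) = 0 := by
      rw [hR, mul_comm]
      exact mul_orth μj Pn N horth R hRdeg
    rw [map_sub] at hz
    exact (sub_eq_zero.mp hz).symm

/-- multiple Gaussian quadrature as discrete multiple orthogonality: with
nodes the simple zeros of `P_n` and interpolatory weights `w^{(j)}_t = ∫ l_t dμ_j`, the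
discrete measures `μ_{j,n} = ∑_t w^{(j)}_t δ_{x_t}` admit `A_1,…,A_n` as normalized type I
and `P_0,…,P_{n−1}` as type II multiple orthogonal polynomials. -/
theorem multiple_gauss_discrete_orthogonality (r : ℕ) (hr : 0 < r)
    (μ : Fin r → (Polynomial ℂ →ₗ[ℂ] ℂ)) (hwc : WeaklyComplete r μ)
    (P : ℕ → Polynomial ℂ)
    (hmonic : ∀ m, (P m).Monic) (hdeg : ∀ m, (P m).natDegree = m)
    (horth : ∀ m, TypeIISol r μ m (P m))
    (A : ℕ → Fin r → Polynomial ℂ) (hA : TypeINormalized r μ A)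
    (n : ℕ) (hn : 0 < n)
    (x : Fin n → ℂ) (hinj : Function.Injective x)
    (hzeros : P n = ∏ t : Fin n, (X - C (x t))) :
    (∀ k, 1 ≤ k → k ≤ n → ∀ ℓ : ℕ, ℓ + 2 ≤ k →
      ∑ j : Fin r, ∑ t : Fin n,
        μ j (Lagrange.basis Finset.univ x t) * (X ^ ℓ * A k j).eval (x t) = 0) ∧
    (∀ k, 1 ≤ k → k ≤ n →
      ∑ j : Fin r, ∑ t : Fin n,
        μ j (Lagrange.basis Finset.univ x t) * (X ^ (k - 1) * A k j).eval (x t) = 1) ∧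
    (∀ m, m ≤ n - 1 → ∀ j : Fin r, ∀ ℓ : ℕ, ℓ < properIndex r m j →
      ∑ t : Fin n,
        μ j (Lagrange.basis Finset.univ x t) * (X ^ ℓ * P m).eval (x t) = 0) := by
  have hmono : ∀ (m k : ℕ) (j : Fin r), m ≤ k → properIndex r m j ≤ properIndex r k j :=
    fun m k j h => Nat.div_le_div_right (by omega)
  refine ⟨?_, ?_, ?_⟩
  · intro k hk1 hkn ℓ hℓ
    have hsum : ∀ j : Fin r,
        ∑ t : Fin n, μ j (Lagrange.basis Finset.univ x t) * (X ^ ℓ * A k j).eval (x t)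
          = μ j (X ^ ℓ * A k j) := by
      intro j
      apply quad_exact x hinj (μ j) (P n) hzeros ((horth n).2 j)
      by_cases hA0 : A k j = 0
      · rw [hA0, mul_zero, degree_zero]; exact WithBot.bot_lt_coe _
      · have hdA : (A k j).natDegree < properIndex r k j :=
          (natDegree_lt_iff_degree_lt hA0).mpr ((hA k hk1).1 j)
        have hQne : X ^ ℓ * A k j ≠ 0 := mul_ne_zero (pow_ne_zero _ X_ne_zero) hA0
        refine (natDegree_lt_iff_degree_lt hQne).mp ?_
        have hd : (X ^ ℓ * A k j).natDegree ≤ ℓ + (A k j).natDegree :=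
          le_trans (natDegree_mul_le) (by rw [natDegree_X_pow])
        have hmon := hmono k n j hkn
        omega
    exact (Finset.sum_congr rfl fun j _ => hsum j).trans ((hA k hk1).2.1 ℓ hℓ)
  · intro k hk1 hkn
    have hsum : ∀ j : Fin r,
        ∑ t : Fin n, μ j (Lagrange.basis Finset.univ x t) * (X ^ (k - 1) * A k j).eval (x t)
          = μ j (X ^ (k - 1) * A k j) := by
      intro j
      apply quad_exact x hinj (μ j) (P n) hzeros ((horth n).2 j)
      by_cases hA0 : A k j = 0
      · rw [hA0, mul_zero, degree_zero]; exact WithBot.bot_lt_coe _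
      · have hdA : (A k j).natDegree < properIndex r k j :=
          (natDegree_lt_iff_degree_lt hA0).mpr ((hA k hk1).1 j)
        have hQne : X ^ (k - 1) * A k j ≠ 0 := mul_ne_zero (pow_ne_zero _ X_ne_zero) hA0
        refine (natDegree_lt_iff_degree_lt hQne).mp ?_
        have hd : (X ^ (k - 1) * A k j).natDegree ≤ (k - 1) + (A k j).natDegree :=
          le_trans (natDegree_mul_le) (by rw [natDegree_X_pow])
        have hmon := hmono k n j hkn
        omega
    exact (Finset.sum_congr rfl fun j _ => hsum j).trans ((hA k hk1).2.2)
  · intro m hm j ℓ hℓ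
    have hbound : (X ^ ℓ * P m).degree < ((n + properIndex r n j : ℕ) : WithBot ℕ) := by
      have hPne : X ^ ℓ * P m ≠ 0 := mul_ne_zero (pow_ne_zero _ X_ne_zero) (hmonic m).ne_zero
      refine (natDegree_lt_iff_degree_lt hPne).mp ?_
      have hd : (X ^ ℓ * P m).natDegree ≤ ℓ + m :=
        le_trans (natDegree_mul_le) (by rw [natDegree_X_pow, hdeg m])
      have hmon := hmono m n j (by omega)
      omega
    exact (quad_exact x hinj (μ j) (P n) hzeros ((horth n).2 j) (X ^ ℓ * P m) hbound).trans
      ((horth m).2 j ℓ hℓ)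
end

section
/- Invariance under triangular change of measures: if μ_1,...,μ_r form a weakly complete system and new measures σ_i = Σ_{j=1}^{i} α_{i,j} μ_j (i = 1,...,r) are formed with complex coefficients α_{i,j}, then σ_1,...,σ_r form a weakly complete system if and only if α_{j,j} ≠ 0 for j = 1,...,r; in that case the type II multiple orthogonal polynomials of σ_1,...,σ_r with proper multi-indices coincide with those of μ_1,...,μ_r, hence the recurrence coefficients agree. -/
open Polynomial

/-- The proper multi-index is antitone in the component index. -/
lemma properIndex_anti (r n : ℕ) {j i : Fin r} (h : j ≤ i) :
    properIndex r n i ≤ properIndex r n j := by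
  have : j.val ≤ i.val := h
  exact Nat.div_le_div_right (by omega)

/-- `k` linear functionals on the `(k+1)`-dimensional space of polynomials of degree `≤ k`
have a common nonzero kernel element. -/
lemma exists_common_kernel (k : ℕ) (φ : Fin k → (Polynomial ℂ →ₗ[ℂ] ℂ)) :
    ∃ P : Polynomial ℂ, P ≠ 0 ∧ P.degree < ((k + 1 : ℕ) : WithBot ℕ) ∧ ∀ j, φ j P = 0 := by
  set V := Polynomial.degreeLT ℂ (k + 1) with hV
  let Φ : V →ₗ[ℂ] (Fin k → ℂ) := LinearMap.pi fun j => (φ j).comp V.subtype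
  have hfr : Module.finrank ℂ V = k + 1 := by
    rw [(Polynomial.degreeLTEquiv ℂ (k + 1)).finrank_eq, Module.finrank_fin_fun]
  have hker : LinearMap.ker Φ ≠ ⊥ := by
    intro hbot
    have hinj : Function.Injective Φ := LinearMap.ker_eq_bot.mp hbot
    have hle := LinearMap.finrank_le_finrank_of_injective hinj
    rw [hfr, Module.finrank_fin_fun] at hle
    omega
  obtain ⟨x, hxker, hx0⟩ := Submodule.exists_mem_ne_zero_of_ne_bot hker
  refine ⟨x.val, ?_, ?_, ?_⟩
  · intro h
    exact hx0 (Subtype.ext h)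
  · exact Polynomial.mem_degreeLT.mp x.2
  · intro j
    have := LinearMap.mem_ker.mp hxker
    exact congrFun this j

/-- invariance under a triangular change of measures: if `μ_1,…,μ_r` is weakly
complete and `σ_i = ∑_{j=1}^{i} α_{i,j} μ_j`, then `σ_1,…,σ_r` is weakly complete iff all
diagonal coefficients `α_{j,j}` are nonzero, and in that case the type II multiple orthogonal
polynomials (for proper multi-indices) of the two systems coincide. -/
theorem triangular_change_of_measures (r : ℕ) (hr : 0 < r)
    (μ : Fin r → (Polynomial ℂ →ₗ[ℂ] ℂ)) (hwc : WeaklyComplete r μ)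
    (α : Fin r → Fin r → ℂ) :
    (WeaklyComplete r (fun i => ∑ j ∈ Finset.Iic i, α i j • μ j) ↔
      ∀ j : Fin r, α j j ≠ 0) ∧
    ((∀ j : Fin r, α j j ≠ 0) → ∀ n (P : Polynomial ℂ),
      TypeIISol r μ n P ↔ TypeIISol r (fun i => ∑ j ∈ Finset.Iic i, α i j • μ j) n P) := by
  set σ : Fin r → (Polynomial ℂ →ₗ[ℂ] ℂ) := fun i => ∑ j ∈ Finset.Iic i, α i j • μ j with hσdef
  have hσapp : ∀ (i : Fin r) (Q : Polynomial ℂ),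
      σ i Q = ∑ j ∈ Finset.Iic i, α i j * μ j Q := by
    intro i Q
    simp [hσdef, LinearMap.sum_apply, LinearMap.smul_apply, smul_eq_mul]
  have hmain : (∀ j : Fin r, α j j ≠ 0) → ∀ n (P : Polynomial ℂ),
      TypeIISol r μ n P ↔ TypeIISol r σ n P := by
    intro hd n P
    constructor
    · rintro ⟨hdeg, horth⟩
      refine ⟨hdeg, fun i ℓ hℓ => ?_⟩
      rw [hσapp]
      refine Finset.sum_eq_zero fun j hj => ?_
      rw [horth j ℓ (lt_of_lt_of_le hℓ (properIndex_anti r n (Finset.mem_Iic.mp hj))),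
        mul_zero]
    · rintro ⟨hdeg, horth⟩
      refine ⟨hdeg, ?_⟩
      have key : ∀ m : ℕ, ∀ i : Fin r, i.val < m →
          ∀ ℓ, ℓ < properIndex r n i → μ i (X ^ ℓ * P) = 0 := by
        intro m
        induction m with
        | zero => intro i hi; exact absurd hi (Nat.not_lt_zero _)
        | succ m ih =>
          intro i hi ℓ hℓ
          by_cases hc : i.val < m
          · exact ih i hc ℓ hℓ
          · have hσi := horth i ℓ hℓ
            rw [hσapp, ← Finset.Iio_insert i, Finset.sum_insert (by simp)] at hσi
            have hrest : ∀ j ∈ Finset.Iio i, α i j * μ j (X ^ ℓ * P) = 0 := by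
              intro j hj
              have hji : j < i := Finset.mem_Iio.mp hj
              have hjv : j.val < i.val := hji
              rw [ih j (by omega) ℓ
                (lt_of_lt_of_le hℓ (properIndex_anti r n hji.le)), mul_zero]
            rw [Finset.sum_eq_zero hrest, add_zero] at hσi
            exact (mul_eq_zero.mp hσi).resolve_left (hd i)
      exact fun i ℓ hℓ => key (i.val + 1) i (Nat.lt_succ_self _) ℓ hℓ
  refine ⟨⟨?_, fun hd n => ⟨fun P hP => (hwc n).1 P ((hmain hd n P).mpr hP),
      fun P Q hP hQ hP0 => (hwc n).2 P Q ((hmain hd n P).mpr hP)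
        ((hmain hd n Q).mpr hQ) hP0⟩⟩, hmain⟩
  intro hσwc k
  by_contra hk
  obtain ⟨P, hP0, hPdeg, hPker⟩ :=
    exists_common_kernel k.val (fun j => μ ⟨j.val, lt_trans j.isLt k.isLt⟩)
  have hsol : TypeIISol r σ (k.val + 1) P := by
    refine ⟨le_of_lt hPdeg, fun i ℓ hℓ => ?_⟩
    have hik : i.val ≤ k.val := by
      by_contra hik
      push_neg at hik
      have : properIndex r (k.val + 1) i = 0 := by
        unfold properIndex
        exact Nat.div_eq_of_lt (by omega)
      omega
    have hν : properIndex r (k.val + 1) i = 1 := by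
      unfold properIndex
      have h1 : 1 * r ≤ k.val + 1 + r - 1 - i.val := by
        have := k.isLt
        omega
      have h2 : k.val + 1 + r - 1 - i.val < (1 + 1) * r := by
        have := k.isLt
        omega
      exact Nat.div_eq_of_lt_le h1 h2
    rw [hν] at hℓ
    interval_cases ℓ
    rw [pow_zero, one_mul, hσapp]
    refine Finset.sum_eq_zero fun j hj => ?_
    have hji0 : j ≤ i := Finset.mem_Iic.mp hj
    have hji : j.val ≤ i.val := hji0
    rcases lt_or_eq_of_le (le_trans hji hik) with hjk | hjk
    · rw [show μ j P = 0 from ?_, mul_zero]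
      have := hPker ⟨j.val, hjk⟩
      simpa using this
    · have hj' : j = k := Fin.ext hjk
      have hi' : i = k := Fin.ext (le_antisymm hik (hjk ▸ hji))
      rw [hj', hi', hk, zero_mul]
  rcases (hσwc (k.val + 1)).1 P hsol with h | h
  · exact hP0 h
  · have : P.natDegree < k.val + 1 := (Polynomial.natDegree_lt_iff_degree_lt hP0).mpr hPdeg
    omega
end
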